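/- Let B = ℂ[x,y,z] be the polynomial ring in three variables and set t = x²y + z². For β ∈ ℂ, the quotient ℂ-algebra B/(x, t − β) is isomorphic to ℂ[T] × ℂ[T] (a product of two one-variable polynomial rings) if β ≠ 0, and is isomorphic to ℂ[T][ξ]/(ξ²) (in particular it is non-reduced) if β = 0. Consequently B is not isomorphic as a ℂ[x,t]-algebra to the polynomial ring ℂ[x,t][T]. -/

import Mathlib

set_option synthInstance.maxHeartbeats 1000000
set_option maxHeartbeats 2000000

open MvPolynomial

/-- The subalgebra `ℂ[x,t] ⊆ ℂ[x,y,z]` generated by `x` and `t = x²y + z²`. -/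
noncomputable def xtSubalgebra : Subalgebra ℂ (MvPolynomial (Fin 3) ℂ) :=
  Algebra.adjoin ℂ {X 0, (X 0) ^ 2 * X 1 + (X 2) ^ 2}

noncomputable section StmtAux

abbrev BB := MvPolynomial (Fin 3) ℂ
abbrev PP := Polynomial (Polynomial ℂ)

def Iβ (β : ℂ) : Ideal BB :=
  Ideal.span {(X 0 : BB), (X 0) ^ 2 * X 1 + (X 2) ^ 2 - C β}

def Lβ (β : ℂ) : Ideal PP :=
  Ideal.span {(Polynomial.X : PP) ^ 2 - Polynomial.C (Polynomial.C β)}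

lemma x_mem_Iβ (β : ℂ) : (X 0 : BB) ∈ Iβ β :=
  Ideal.subset_span (Set.mem_insert _ _)

lemma t_mem_Iβ (β : ℂ) : ((X 0) ^ 2 * X 1 + (X 2) ^ 2 - C β : BB) ∈ Iβ β :=
  Ideal.subset_span (Set.mem_insert_of_mem _ rfl)

lemma z2_mem_Iβ (β : ℂ) : ((X 2 : BB) ^ 2 - C β) ∈ Iβ β := by
  have h : ((X 2 : BB) ^ 2 - C β)
      = ((X 0) ^ 2 * X 1 + (X 2) ^ 2 - C β) - (X 0) * ((X 0) * (X 1)) := by ring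
  rw [h]
  exact sub_mem (t_mem_Iβ β) (Ideal.mul_mem_right _ _ (x_mem_Iβ β))

/-- Forward map `B → ℂ[Y][Z]/(Z² - β)`. -/
def φ (β : ℂ) : BB →ₐ[ℂ] (PP ⧸ Lβ β) :=
  MvPolynomial.aeval
    ![0, Ideal.Quotient.mk (Lβ β) (Polynomial.C Polynomial.X),
        Ideal.Quotient.mk (Lβ β) Polynomial.X]

lemma φ_kills (β : ℂ) : ∀ a ∈ Iβ β, φ β a = 0 := by
  intro a ha
  have hle : Iβ β ≤ RingHom.ker (φ β) := by
    rw [Iβ, Ideal.span_le]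
    rintro p (rfl | rfl)
    · simp [RingHom.mem_ker, φ]
    · rw [SetLike.mem_coe, RingHom.mem_ker]
      simp only [φ, map_sub, map_add, map_mul, map_pow,
        MvPolynomial.aeval_X, MvPolynomial.aeval_C,
        Matrix.cons_val_zero, Matrix.cons_val_one, Matrix.head_cons,
        Matrix.cons_val_two, Matrix.tail_cons, zero_pow, zero_mul, zero_add]
      have h0 : ((Ideal.Quotient.mk (Lβ β)) (Polynomial.X : PP)) ^ 2 =
          (Ideal.Quotient.mk (Lβ β)) (Polynomial.C (Polynomial.C β)) := by
        rw [← map_pow, ← sub_eq_zero, ← map_sub]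
        exact Ideal.Quotient.eq_zero_iff_mem.2 (Ideal.subset_span rfl)
      simp [h0, IsScalarTower.algebraMap_apply ℂ PP (PP ⧸ Lβ β),
        Ideal.Quotient.algebraMap_eq, Polynomial.algebraMap_apply]
      ring
  exact hle ha

def φbar (β : ℂ) : (BB ⧸ Iβ β) →ₐ[ℂ] (PP ⧸ Lβ β) :=
  Ideal.Quotient.liftₐ (Iβ β) (φ β) (φ_kills β)

/-- Backward map `ℂ[Y][Z] → B/Iβ`. -/
def ψ (β : ℂ) : PP →ₐ[ℂ] (BB ⧸ Iβ β) :=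
  Polynomial.aevalTower (Polynomial.aeval (Ideal.Quotient.mk (Iβ β) (X 1)))
    (Ideal.Quotient.mk (Iβ β) (X 2))

lemma ψ_kills (β : ℂ) : ∀ a ∈ Lβ β, ψ β a = 0 := by
  intro a ha
  have hle : Lβ β ≤ RingHom.ker (ψ β) := by
    rw [Lβ, Ideal.span_le]
    rintro p rfl
    rw [SetLike.mem_coe, RingHom.mem_ker]
    simp only [ψ, map_sub, map_pow, Polynomial.aevalTower_X,
      Polynomial.aevalTower_C, Polynomial.aeval_C]
    rw [IsScalarTower.algebraMap_apply ℂ BB (BB ⧸ Iβ β), Ideal.Quotient.algebraMap_eq,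
      MvPolynomial.algebraMap_eq, ← map_pow, ← map_sub, Ideal.Quotient.eq_zero_iff_mem]
    exact z2_mem_Iβ β
  exact hle ha

def ψbar (β : ℂ) : (PP ⧸ Lβ β) →ₐ[ℂ] (BB ⧸ Iβ β) :=
  Ideal.Quotient.liftₐ (Lβ β) (ψ β) (ψ_kills β)

/-- The main equivalence `B/(x, t-β) ≅ ℂ[Y][Z]/(Z²-β)`. -/
def mainEquiv (β : ℂ) : (BB ⧸ Iβ β) ≃ₐ[ℂ] (PP ⧸ Lβ β) :=
  AlgEquiv.ofAlgHom (φbar β) (ψbar β)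
    (by
      apply Ideal.Quotient.algHom_ext
      apply Polynomial.algHom_ext'
      · apply Polynomial.algHom_ext
        simp [φbar, ψbar, φ, ψ, Polynomial.CAlgHom]
        erw [Ideal.Quotient.lift_mk]; simp; erw [Ideal.Quotient.lift_mk]; simp
      · simp [φbar, ψbar, φ, ψ]
        erw [Ideal.Quotient.lift_mk]; simp; erw [Ideal.Quotient.lift_mk]; simp)
    (by
      apply Ideal.Quotient.algHom_ext
      apply MvPolynomial.algHom_ext
      intro i
      fin_cases i
      · have h0 : (Ideal.Quotient.mk (Iβ β)) (X 0) = 0 :=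
          Ideal.Quotient.eq_zero_iff_mem.2 (x_mem_Iβ β)
        simp [φbar, ψbar, φ, ψ, h0]
      · simp [φbar, ψbar, φ, ψ]
        erw [Ideal.Quotient.lift_mk]; simp; erw [Ideal.Quotient.lift_mk]; simp
      · simp [φbar, ψbar, φ, ψ]
        erw [Ideal.Quotient.lift_mk]; simp; erw [Ideal.Quotient.lift_mk]; simp)

lemma mainEquiv_mk_z (β : ℂ) :
    mainEquiv β (Ideal.Quotient.mk (Iβ β) (X 2)) = Ideal.Quotient.mk (Lβ β) Polynomial.X := by
  simp [mainEquiv, φbar, φ]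
  exact MvPolynomial.aeval_X _ _


/-- `ℂ[Y][Z]/(Z²-β) ≅ ℂ[Y] × ℂ[Y]` for `β = s² ≠ 0`. -/
def prodEquiv (β s : ℂ) (hs : s ^ 2 = β) (hs0 : s ≠ 0) :
    (PP ⧸ Lβ β) ≃ₐ[ℂ] (Polynomial ℂ × Polynomial ℂ) := by
  have hfact : Lβ β = Ideal.span {Polynomial.X - Polynomial.C (Polynomial.C s)} * Ideal.span {Polynomial.X + Polynomial.C (Polynomial.C s)} := by
    rw [Lβ, Ideal.span_singleton_mul_span_singleton]
    have h2 : (Polynomial.X : PP) ^ 2 - Polynomial.C (Polynomial.C β)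
        = (Polynomial.X - Polynomial.C (Polynomial.C s)) * (Polynomial.X + Polynomial.C (Polynomial.C s)) := by
      rw [← hs, map_pow, map_pow]; ring
    rw [h2]
  have h2s : (2 * s) ≠ 0 := mul_ne_zero two_ne_zero hs0
  have key : (Polynomial.C (Polynomial.C ((2 * s)⁻¹)) : PP)
      * (2 * Polynomial.C (Polynomial.C s)) = 1 := by
    have h2a : (2 : PP) * Polynomial.C (Polynomial.C s)
        = Polynomial.C (Polynomial.C (2 * s)) := by
      simp [map_mul, map_ofNat]
    rw [h2a, ← map_mul, ← map_mul, inv_mul_cancel₀ h2s, map_one, map_one]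
  have hcop : IsCoprime (Ideal.span {(Polynomial.X : PP) - Polynomial.C (Polynomial.C s)}) (Ideal.span {Polynomial.X + Polynomial.C (Polynomial.C s)}) := by
    rw [Ideal.isCoprime_span_singleton_iff]
    refine ⟨-(Polynomial.C (Polynomial.C ((2 * s)⁻¹))), Polynomial.C (Polynomial.C ((2 * s)⁻¹)), ?_⟩
    linear_combination key
  have hspan2 : Ideal.span {(Polynomial.X : PP) + Polynomial.C (Polynomial.C s)}
      = Ideal.span {Polynomial.X - Polynomial.C (-(Polynomial.C s))} := by
    rw [map_neg, sub_neg_eq_add]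
  refine AlgEquiv.ofRingEquiv (f := ((Ideal.quotEquivOfEq hfact).trans
    (Ideal.quotientMulEquivQuotientProd _ _ hcop)).trans
    (RingEquiv.prodCongr
      ((Polynomial.quotientSpanXSubCAlgEquiv (Polynomial.C s)).toRingEquiv)
      (((Ideal.quotEquivOfEq hspan2).trans
        (Polynomial.quotientSpanXSubCAlgEquiv (-(Polynomial.C s))).toRingEquiv)))) ?_
  intro c
  have hmk : @algebraMap ℂ (PP ⧸ Lβ β) _ inferInstance _ c
      = Ideal.Quotient.mk (Lβ β) (Polynomial.C (Polynomial.C c)) := by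
    rw [IsScalarTower.algebraMap_apply ℂ PP (PP ⧸ Lβ β), Ideal.Quotient.algebraMap_eq,
      Polynomial.algebraMap_apply, Polynomial.algebraMap_apply]
    simp
  rw [hmk]
  apply Prod.ext <;>
    simp [Ideal.quotEquivOfEq_mk, Polynomial.algebraMap_apply]

lemma nonreduced0 : ¬ IsReduced (BB ⧸ Iβ 0) := by
  intro hred
  set b := Ideal.Quotient.mk (Iβ 0) (X 2) with hb
  have hb2 : b ^ 2 = 0 := by
    rw [hb, ← map_pow, Ideal.Quotient.eq_zero_iff_mem]
    have := z2_mem_Iβ 0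
    simpa using this
  haveI := hred
  have hb0 : b = 0 := IsNilpotent.eq_zero ⟨2, hb2⟩
  have hL0 : Lβ 0 = Ideal.span {(Polynomial.X : PP) ^ 2} := by
    rw [Lβ]; norm_num
  have hmkX : (Ideal.Quotient.mk (Lβ 0)) (Polynomial.X : PP) = 0 := by
    have := congrArg (mainEquiv 0) hb0
    rw [mainEquiv_mk_z, map_zero] at this
    exact this
  rw [Ideal.Quotient.eq_zero_iff_mem, hL0, Ideal.mem_span_singleton] at hmkX
  have hcoeff := Polynomial.X_pow_dvd_iff.mp hmkX 1 (by norm_num)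
  rw [Polynomial.coeff_X_one] at hcoeff
  exact one_ne_zero hcoeff


lemma xmem : (X 0 : BB) ∈ xtSubalgebra := Algebra.subset_adjoin (Set.mem_insert _ _)

lemma tmem : ((X 0 : BB) ^ 2 * X 1 + (X 2) ^ 2) ∈ xtSubalgebra :=
  Algebra.subset_adjoin (Set.mem_insert_of_mem _ rfl)

def xel : xtSubalgebra := ⟨X 0, xmem⟩
def tel : xtSubalgebra := ⟨(X 0) ^ 2 * X 1 + (X 2) ^ 2, tmem⟩
def I₀ : Ideal xtSubalgebra := Ideal.span {xel, tel}

lemma adjoin_xt_top : Algebra.adjoin ℂ ({xel, tel} : Set xtSubalgebra) = ⊤ := by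
  apply Subalgebra.map_injective (f := xtSubalgebra.val) Subtype.val_injective
  rw [AlgHom.map_adjoin, Set.image_pair, Algebra.map_top, Subalgebra.range_val]
  rfl

lemma surj_bot : ∀ q : xtSubalgebra ⧸ I₀, ∃ c : ℂ, algebraMap ℂ _ c = q := by
  intro q
  have h2 := congrArg (Subalgebra.map (Ideal.Quotient.mkₐ ℂ I₀)) adjoin_xt_top
  rw [AlgHom.map_adjoin, Set.image_pair, Algebra.map_top,
    (AlgHom.range_eq_top _).mpr (Ideal.Quotient.mkₐ_surjective ℂ I₀)] at h2
  have h1 : (⊤ : Subalgebra ℂ (xtSubalgebra ⧸ I₀)) ≤ ⊥ := by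
    rw [← h2]
    apply Algebra.adjoin_le
    rintro p (rfl | rfl)
    · have h0 : Ideal.Quotient.mkₐ ℂ I₀ xel = 0 :=
        Ideal.Quotient.eq_zero_iff_mem.2 (Ideal.subset_span (Set.mem_insert _ _))
      rw [h0]; exact zero_mem ⊥
    · have h0 : Ideal.Quotient.mkₐ ℂ I₀ tel = 0 :=
        Ideal.Quotient.eq_zero_iff_mem.2 (Ideal.subset_span (Set.mem_insert_of_mem _ rfl))
      rw [h0]; exact zero_mem ⊥
  exact Algebra.mem_bot.1 (h1 (by trivial))

lemma isReduced_quot : IsReduced (xtSubalgebra ⧸ I₀) := by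
  constructor
  rintro q ⟨n, hn⟩
  obtain ⟨c, rfl⟩ := surj_bot q
  by_cases hc : c = 0
  · simp [hc]
  · have hu : IsUnit ((algebraMap ℂ (xtSubalgebra ⧸ I₀)) c) :=
      (isUnit_iff_ne_zero.2 hc).map _
    have h0 : IsUnit ((algebraMap ℂ (xtSubalgebra ⧸ I₀)) c ^ n) := hu.pow n
    rw [hn] at h0
    have h01 := isUnit_zero_iff.1 h0
    haveI : Subsingleton (xtSubalgebra ⧸ I₀) := subsingleton_of_zero_eq_one h01
    exact Subsingleton.elim _ _

lemma isReduced_polyquot : IsReduced (Polynomial (xtSubalgebra ⧸ I₀)) := by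
  haveI := isReduced_quot
  constructor
  intro p hp
  ext n
  simpa using IsNilpotent.eq_zero (((Polynomial.isNilpotent_iff (R := xtSubalgebra ⧸ I₀)).1 hp) n)

lemma no_iso : ¬ Nonempty (MvPolynomial (Fin 3) ℂ ≃ₐ[↥xtSubalgebra] Polynomial ↥xtSubalgebra) := by
  rintro ⟨e⟩
  have hex : e (X 0) = Polynomial.C xel := by
    have h1 : (X 0 : BB) = algebraMap xtSubalgebra BB xel := rfl
    rw [h1, AlgEquiv.commutes, Polynomial.algebraMap_eq]
  have het : e ((X 0 : BB) ^ 2 * X 1 + (X 2) ^ 2) = Polynomial.C tel := by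
    have h1 : ((X 0 : BB) ^ 2 * X 1 + (X 2) ^ 2) = algebraMap xtSubalgebra BB tel := rfl
    rw [h1, AlgEquiv.commutes, Polynomial.algebraMap_eq]
  have hI0eq : Iβ 0 = Ideal.span {(X 0 : BB), (X 0) ^ 2 * X 1 + (X 2) ^ 2} := by
    rw [Iβ]; norm_num
  have hmapeq : Ideal.map (e.toRingEquiv : BB →+* Polynomial xtSubalgebra) (Iβ 0)
      = Ideal.map (Polynomial.C : ↥xtSubalgebra →+* Polynomial xtSubalgebra) I₀ := by
    rw [hI0eq, Ideal.map_span, Set.image_pair, I₀, Ideal.map_span, Set.image_pair,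
      show ((e.toRingEquiv : BB →+* Polynomial xtSubalgebra) (X 0)) = Polynomial.C xel from hex,
      show ((e.toRingEquiv : BB →+* Polynomial xtSubalgebra)
        ((X 0 : BB) ^ 2 * X 1 + (X 2) ^ 2)) = Polynomial.C tel from het]
  let F : (BB ⧸ Iβ 0) ≃+* Polynomial (xtSubalgebra ⧸ I₀) :=
    ((Ideal.quotientEquiv (Iβ 0) _ e.toRingEquiv rfl).trans
      (Ideal.quotEquivOfEq hmapeq)).trans
      (Ideal.polynomialQuotientEquivQuotientPolynomial I₀).symm
  haveI := isReduced_polyquot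
  exact nonreduced0 (isReduced_of_injective F F.injective)

end StmtAux

set_option synthInstance.maxHeartbeats 1000000 in
theorem stmt17 :
    (∀ β : ℂ, β ≠ 0 →
      Nonempty ((MvPolynomial (Fin 3) ℂ ⧸
          Ideal.span {(X 0 : MvPolynomial (Fin 3) ℂ),
            (X 0) ^ 2 * X 1 + (X 2) ^ 2 - C β})
        ≃ₐ[ℂ] (Polynomial ℂ × Polynomial ℂ))) ∧
    (Nonempty ((MvPolynomial (Fin 3) ℂ ⧸
          Ideal.span {(X 0 : MvPolynomial (Fin 3) ℂ),
            (X 0) ^ 2 * X 1 + (X 2) ^ 2 - C (0 : ℂ)})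
        ≃ₐ[ℂ] (Polynomial (Polynomial ℂ) ⧸
            Ideal.span {(Polynomial.X : Polynomial (Polynomial ℂ)) ^ 2}))) ∧
    ¬ IsReduced (MvPolynomial (Fin 3) ℂ ⧸
        Ideal.span {(X 0 : MvPolynomial (Fin 3) ℂ),
          (X 0) ^ 2 * X 1 + (X 2) ^ 2 - C (0 : ℂ)}) ∧
    ¬ Nonempty (MvPolynomial (Fin 3) ℂ ≃ₐ[↥xtSubalgebra] Polynomial ↥xtSubalgebra) := by
  refine ⟨?_, ?_, ?_, no_iso⟩
  · intro β hβ
    obtain ⟨s, hs⟩ := IsAlgClosed.exists_pow_nat_eq β (n := 2) (by norm_num)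
    have hs0 : s ≠ 0 := by
      rintro rfl
      apply hβ
      rw [← hs]
      norm_num
    exact ⟨(mainEquiv β).trans (prodEquiv β s hs hs0)⟩
  · have hL0 : Lβ 0 = Ideal.span {(Polynomial.X : PP) ^ 2} := by
      rw [Lβ]; norm_num
    exact ⟨(mainEquiv 0).trans (Ideal.quotientEquivAlgOfEq ℂ hL0)⟩
  · exact nonreduced0
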